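/- The SUM aggregator is measurable: the map Multiset.sum : Multiset ℝ → ℝ, sending a finite multiset of real numbers to the sum of its elements (with multiplicity, the empty multiset mapping to 0), is measurable with respect to the counting σ-algebra on Multiset ℝ (for the Borel σ-algebra on ℝ) and the Borel σ-algebra on ℝ. -/

import Mathlib

/- `countIn D E` is the number of elements of the finite multiset `D` lying in the set `E`,
counted with multiplicity. -/
open Classical in
noncomputable def countIn {X : Type*} (D : Multiset X) (E : Set X) : ℕ :=
  (D.filter (· ∈ E)).card

/-- The counting σ-algebra on the space of finite multisets over a measurable space `X`:
generated by the counting events `C(E,n) = {D | countIn D E = n}` for `E` measurable, `n : ℕ`. -/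
def countingMS (X : Type*) [MeasurableSpace X] : MeasurableSpace (Multiset X) :=
  MeasurableSpace.generateFrom
    {C : Set (Multiset X) |
      ∃ (E : Set X) (n : ℕ), MeasurableSet E ∧ C = {D : Multiset X | countIn D E = n}}

open Filter

lemma measurable_countIn {E : Set ℝ} (hE : MeasurableSet E) :
    @Measurable _ _ (countingMS ℝ) _ (fun D => countIn D E) := by
  letI := countingMS ℝ
  apply measurable_to_countable'
  intro n
  exact MeasurableSpace.measurableSet_generateFrom ⟨E, n, hE, rfl⟩

open Classical in
lemma countIn_cons (a : ℝ) (D : Multiset ℝ) (E : Set ℝ) :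
    countIn (a ::ₘ D) E = countIn D E + (if a ∈ E then 1 else 0) := by
  simp only [countIn, Multiset.filter_cons]
  split <;> simp [add_comm]

lemma sum_map_eq_sum_fiber (h : ℝ → ℤ) (c : ℤ → ℝ) :
    ∀ (D : Multiset ℝ) (s : Finset ℤ), (∀ x ∈ D, h x ∈ s) →
    (D.map (fun x => c (h x))).sum = ∑ j ∈ s, c j * (countIn D {x | h x = j} : ℝ) := by
  intro D
  induction D using Multiset.induction with
  | empty => intro s _; simp [countIn]
  | cons a D ih =>
    intro s hs
    have ha : h a ∈ s := hs a (Multiset.mem_cons_self a D)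
    have hD : ∀ x ∈ D, h x ∈ s := fun x hx => hs x (Multiset.mem_cons_of_mem hx)
    simp only [Multiset.map_cons, Multiset.sum_cons, ih s hD]
    have : ∀ j, countIn (a ::ₘ D) {x | h x = j}
        = countIn D {x | h x = j} + (if h a = j then 1 else 0) := by
      intro j
      rw [countIn_cons]
      simp [Set.mem_setOf_eq]
    simp only [this]
    push_cast
    rw [Finset.sum_congr rfl (fun j _ => mul_add (c j) _ _), Finset.sum_add_distrib]
    have : ∑ j ∈ s, c j * (if h a = j then (1:ℝ) else 0)
        = c (h a) := by
      rw [Finset.sum_eq_single (h a)]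
      · simp
      · intro b _ hb; simp [Ne.symm hb]
      · intro habs; exact absurd ha habs
    rw [this]; ring

lemma abs_sum_map_sub (g : ℝ → ℝ) (δ : ℝ) (_hδ : 0 ≤ δ) (hg : ∀ x, |g x - x| ≤ δ) :
    ∀ D : Multiset ℝ, |(D.map g).sum - D.sum| ≤ D.card * δ := by
  intro D
  induction D using Multiset.induction with
  | empty => simp
  | cons a D ih =>
    simp only [Multiset.map_cons, Multiset.sum_cons, Multiset.card_cons]
    have : g a + (D.map g).sum - (a + D.sum) = (g a - a) + ((D.map g).sum - D.sum) := by ring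
    rw [this]
    calc |(g a - a) + ((D.map g).sum - D.sum)|
        ≤ |g a - a| + |(D.map g).sum - D.sum| := abs_add_le _ _
      _ ≤ δ + D.card * δ := add_le_add (hg a) ih
      _ = ((Multiset.card D + 1 : ℕ) : ℝ) * δ := by push_cast; ring

theorem sumAggregator_measurable :
    @Measurable _ _ (countingMS ℝ) _ (Multiset.sum : Multiset ℝ → ℝ) := by
  letI := countingMS ℝ
  -- dyadic approximations
  set g : ℕ → ℝ → ℝ := fun k x => (⌊x * 2 ^ k⌋ : ℝ) / 2 ^ k with hg
  have hpow : ∀ k : ℕ, (0:ℝ) < 2 ^ k := fun k => by positivity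
  have hgapprox : ∀ k x, |g k x - x| ≤ (1/2) ^ k := by
    intro k x
    have h1 : (⌊x * 2 ^ k⌋ : ℝ) ≤ x * 2 ^ k := Int.floor_le _
    have h2 : x * 2 ^ k - 1 < (⌊x * 2 ^ k⌋ : ℝ) := Int.sub_one_lt_floor _
    have hk : (1/2:ℝ)^k * 2^k = 1 := by rw [← mul_pow]; norm_num
    rw [abs_le]
    constructor
    · rw [hg]
      rw [div_sub' (ne_of_gt (hpow k)), le_div_iff₀ (hpow k)]
      linarith
    · rw [hg]
      rw [div_sub' (ne_of_gt (hpow k)), div_le_iff₀ (hpow k)]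
      linarith
  -- each dyadic approximant of the sum is measurable
  have hfk : ∀ k : ℕ, Measurable (fun D : Multiset ℝ => ((D.map (g k)).sum : ℝ)) := by
    intro k
    set h : ℝ → ℤ := fun x => ⌊x * 2 ^ k⌋ with hh
    have hhm : Measurable h := (measurable_id.mul_const _).floor
    -- partial sums over Icc (-N) N
    set S : ℕ → Multiset ℝ → ℝ := fun N D =>
      ∑ j ∈ Finset.Icc (-(N:ℤ)) (N:ℤ), ((j:ℝ) / 2 ^ k) * (countIn D {x | h x = j} : ℝ) with hS
    have hSmeas : ∀ N, Measurable (S N) := by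
      intro N
      apply Finset.measurable_sum
      intro j _
      exact (measurable_const.mul
        ((measurable_from_top).comp (measurable_countIn (hhm (measurableSet_singleton j)))))
    have hconv : ∀ D : Multiset ℝ,
        Tendsto (fun N => S N D) atTop (nhds ((D.map (g k)).sum)) := by
      intro D
      set s₀ : Finset ℤ := (D.map h).toFinset with hs₀
      set N₀ : ℕ := s₀.sup (fun j => j.natAbs) with hN₀
      apply tendsto_atTop_of_eventually_const (i₀ := N₀)
      intro N hN
      have hsub : ∀ x ∈ D, h x ∈ Finset.Icc (-(N:ℤ)) (N:ℤ) := by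
        intro x hx
        have hmem : h x ∈ s₀ := by
          rw [hs₀, Multiset.mem_toFinset]
          exact Multiset.mem_map_of_mem h hx
        have : (h x).natAbs ≤ N₀ := Finset.le_sup (f := fun j => j.natAbs) hmem
        have habs : (h x).natAbs ≤ N := le_trans this hN
        rw [Finset.mem_Icc]
        omega
      show (∑ j ∈ Finset.Icc (-(N:ℤ)) (N:ℤ), ((j:ℝ)/2^k) * (countIn D {x | h x = j} : ℝ))
          = (D.map (g k)).sum
      rw [← sum_map_eq_sum_fiber h (fun j => (j:ℝ)/2^k) D _ hsub]
    exact measurable_of_tendsto_metrizable hSmeas (tendsto_pi_nhds.mpr hconv)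
  -- the sum is the pointwise limit of the approximants
  apply measurable_of_tendsto_metrizable hfk
  rw [tendsto_pi_nhds]
  intro D
  rw [← tendsto_sub_nhds_zero_iff]
  apply squeeze_zero_norm (a := fun k => (D.card : ℝ) * (1/2)^k)
  · intro k
    exact abs_sum_map_sub (g k) ((1/2)^k) (by positivity) (fun x => hgapprox k x) D
  · rw [show (0:ℝ) = (D.card:ℝ) * 0 by ring]
    exact (tendsto_pow_atTop_nhds_zero_of_lt_one (by norm_num) (by norm_num)).const_mul _
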